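/- Let G be a group acting continuously by homeomorphisms on [0,1] such that the action is expansive. Then there exist a subgroup H of G and an open interval (a,b) ⊆ [0,1] such that (a,b) is H-invariant, the restricted action of H on (a,b) is minimal, and the action of H on [a,b] is expansive. -/

import Mathlib

open Set unitInterval

namespace ExpansiveAux

variable {G : Type*} [Group G] [MulAction G unitInterval] [ContinuousConstSMul G unitInterval]

local notation "X" => unitInterval

/-- orientation preserving elements -/
def IsUp (g : G) : Prop := g • (0 : X) = 0

lemma convexT : Convex ℝ {p : ℝ × ℝ | 0 ≤ p.1 ∧ p.1 < p.2 ∧ p.2 ≤ 1} := by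
  rintro ⟨a1, a2⟩ ⟨h1, h2, h3⟩ ⟨b1, b2⟩ ⟨k1, k2, k3⟩ s t hs ht hst
  have e1 : (s • (a1, a2) + t • (b1, b2)).1 = s * a1 + t * b1 := rfl
  have e2 : (s • (a1, a2) + t • (b1, b2)).2 = s * a2 + t * b2 := rfl
  refine ⟨?_, ?_, ?_⟩
  · rw [e1]; have := mul_nonneg hs h1; have := mul_nonneg ht k1; linarith
  · rw [e1, e2]
    rcases eq_or_lt_of_le hs with hs0 | hs0
    · have hts : t = 1 := by linarith
      subst hts; rw [← hs0]; simpa using k2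
    · have h5 : s * a1 < s * a2 := by exact (mul_lt_mul_iff_right₀ hs0).2 h2
      have h6 : t * b1 ≤ t * b2 := mul_le_mul_of_nonneg_left k2.le ht
      linarith
  · rw [e2]
    have h5 : s * a2 ≤ s * 1 := mul_le_mul_of_nonneg_left h3 hs
    have h6 : t * b2 ≤ t * 1 := mul_le_mul_of_nonneg_left k3 ht
    nlinarith

lemma mono_or_anti (g : G) :
    (∀ x y : X, x < y → g • x < g • y) ∨ (∀ x y : X, x < y → g • y < g • x) := by
  have hinj : Function.Injective (fun x : X => g • x) := MulAction.injective g
  by_contra hcon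
  push_neg at hcon
  obtain ⟨⟨x, y, hxy, hxy'⟩, ⟨x', y', hxy2, hxy2'⟩⟩ := hcon
  have hdec : g • y < g • x := by
    rcases lt_or_eq_of_le hxy' with h | h
    · exact h
    · exact absurd (hinj h).symm (ne_of_lt hxy)
  have hinc : g • x' < g • y' := by
    rcases lt_or_eq_of_le hxy2' with h | h
    · exact h
    · exact absurd (hinj h.symm) (ne_of_lt hxy2).symm
  -- build the continuous function on the convex set
  set T : Set (ℝ × ℝ) := {p : ℝ × ℝ | 0 ≤ p.1 ∧ p.1 < p.2 ∧ p.2 ≤ 1} with hT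
  set pj : ℝ → X := Set.projIcc (0:ℝ) 1 zero_le_one with hpj
  set F : ℝ × ℝ → ℝ := fun p => ((g • pj p.2 : X) : ℝ) - ((g • pj p.1 : X) : ℝ) with hF
  have hFcont : Continuous F := by
    apply Continuous.sub
    · exact continuous_subtype_val.comp ((continuous_const_smul g).comp
        (continuous_projIcc.comp continuous_snd))
    · exact continuous_subtype_val.comp ((continuous_const_smul g).comp
        (continuous_projIcc.comp continuous_fst))
  have hmemxy : ((x : ℝ), (y : ℝ)) ∈ T := ⟨x.2.1, Subtype.coe_lt_coe.2 hxy, y.2.2⟩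
  have hmemxy' : ((x' : ℝ), (y' : ℝ)) ∈ T := ⟨x'.2.1, Subtype.coe_lt_coe.2 hxy2, y'.2.2⟩
  have hpjx : ∀ z : X, pj (z : ℝ) = z := by
    intro z; rw [hpj]; rw [Set.projIcc_of_mem zero_le_one z.2]
  have hFxy : F ((x : ℝ), (y : ℝ)) ≤ 0 := by
    simp only [hF, hpjx]
    have := Subtype.coe_lt_coe.2 hdec
    linarith
  have hFxy' : (0:ℝ) ≤ F ((x' : ℝ), (y' : ℝ)) := by
    simp only [hF, hpjx]
    have := Subtype.coe_lt_coe.2 hinc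
    linarith
  obtain ⟨q, hqT, hq0⟩ := (convexT.isPreconnected).intermediate_value₂
    hmemxy hmemxy' hFcont.continuousOn continuousOn_const hFxy hFxy'
  have : g • pj q.2 = g • pj q.1 := by
    apply Subtype.ext
    have : ((g • pj q.2 : X) : ℝ) - ((g • pj q.1 : X) : ℝ) = 0 := hq0
    linarith
  have hpq : pj q.2 = pj q.1 := hinj this
  obtain ⟨hq1, hq2, hq3⟩ := hqT
  have hm1 : q.1 ∈ Set.Icc (0:ℝ) 1 := ⟨hq1, le_of_lt (lt_of_lt_of_le hq2 hq3)⟩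
  have hm2 : q.2 ∈ Set.Icc (0:ℝ) 1 := ⟨le_of_lt (lt_of_le_of_lt hq1 hq2), hq3⟩
  rw [hpj, Set.projIcc_of_mem zero_le_one hm2, Set.projIcc_of_mem zero_le_one hm1] at hpq
  exact absurd (congrArg Subtype.val hpq) (ne_of_gt hq2)
lemma zeroX_lt_oneX : (0 : X) < 1 := by
  rw [← Subtype.coe_lt_coe]
  norm_num [show ((0:X):ℝ) = 0 from rfl, show ((1:X):ℝ) = 1 from rfl]

lemma up_lt {g : G} (hg : IsUp g) {x y : X} (h : x < y) : g • x < g • y := by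
  rcases mono_or_anti g with hm | ha
  · exact hm x y h
  · exfalso
    have h2 := ha 0 1 zeroX_lt_oneX
    rw [hg] at h2
    rw [← Subtype.coe_lt_coe] at h2
    have h3 : (0:ℝ) ≤ ((g • (1:X) : X) : ℝ) := (g • (1:X)).2.1
    have h4 : ((0:X):ℝ) = 0 := rfl
    rw [h4] at h2
    linarith

lemma up_le {g : G} (hg : IsUp g) {x y : X} (h : x ≤ y) : g • x ≤ g • y := by
  rcases lt_or_eq_of_le h with h' | h'
  · exact (up_lt hg h').le
  · rw [h']

lemma up_one {g : G} (hg : IsUp g) : g • (1 : X) = 1 := by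
  obtain ⟨z, hz0⟩ := MulAction.surjective (β := X) g (1 : X)
  have hz : g • z = 1 := hz0
  have hz1 : z ≤ 1 := z.2.2
  have := up_le hg hz1
  rw [hz] at this
  exact le_antisymm (g • (1:X)).2.2 this

lemma IsUp.inv {g : G} (hg : IsUp g) : IsUp g⁻¹ := by
  have h2 := congrArg (fun t => g⁻¹ • t) hg
  simpa [IsUp, inv_smul_smul] using h2.symm

lemma IsUp.mul {g h : G} (hg : IsUp g) (hh : IsUp h) : IsUp (g * h) := by
  rw [IsUp, mul_smul, hh, hg]

lemma IsUp.one : IsUp (1 : G) := one_smul G _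

lemma not_up {g : G} (hg : ¬ IsUp g) : g • (0 : X) = 1 := by
  rcases mono_or_anti g with hm | ha
  · exfalso
    apply hg
    obtain ⟨z, hz0⟩ := MulAction.surjective (β := X) g (0 : X)
    have hle : g • (0:X) ≤ g • z := by
      rcases lt_or_eq_of_le (z.2.1 : (0:ℝ) ≤ (z:ℝ)) with h' | h'
      · exact (hm 0 z (by rw [← Subtype.coe_lt_coe]; exact h')).le
      · have h5 : (0 : X) = z := Subtype.ext h'
        rw [← h5]
    have hz : g • z = 0 := hz0
    rw [hz] at hle
    exact le_antisymm hle (g • (0:X)).2.1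
  · obtain ⟨z, hz0⟩ := MulAction.surjective (β := X) g (1 : X)
    have hz1 : g • z ≤ g • (0:X) := by
      rcases lt_or_eq_of_le (z.2.1 : (0:ℝ) ≤ (z:ℝ)) with h' | h'
      · exact (ha 0 z (by rw [← Subtype.coe_lt_coe]; exact h')).le
      · have h5 : (0 : X) = z := Subtype.ext h'
        rw [← h5]
    have hz : g • z = 1 := hz0
    rw [hz] at hz1
    exact le_antisymm (g • (0:X)).2.2 hz1

variable (G) in
/-- An interval `[p,q]` is good if any orientation-preserving element moving some
interior point to an interior point must fix both endpoints. -/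
def Good (p q : X) : Prop :=
  ∀ g : G, IsUp g → (∃ w : X, (p < w ∧ w < q) ∧ (p < g • w ∧ g • w < q)) →
    g • p = p ∧ g • q = q

lemma Good.smul {p q : X} (hpq : Good G p q) {γ : G} (hγ : IsUp γ) :
    Good G (γ • p) (γ • q) := by
  intro g hg ⟨w, ⟨hw1, hw2⟩, hw3, hw4⟩
  have key := hpq (γ⁻¹ * g * γ) ((hγ.inv.mul hg).mul hγ) ?_
  · constructor
    · have := key.1
      have h2 : (γ * (γ⁻¹ * g * γ)) • p = γ • p := by rw [mul_smul, this]
      rw [show γ * (γ⁻¹ * g * γ) = g * γ by group] at h2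
      rw [← mul_smul]; exact h2
    · have := key.2
      have h2 : (γ * (γ⁻¹ * g * γ)) • q = γ • q := by rw [mul_smul, this]
      rw [show γ * (γ⁻¹ * g * γ) = g * γ by group] at h2
      rw [← mul_smul]; exact h2
  · refine ⟨γ⁻¹ • w, ⟨?_, ?_⟩, ?_, ?_⟩
    · have := up_lt hγ.inv hw1; rwa [inv_smul_smul] at this
    · have := up_lt hγ.inv hw2; rwa [inv_smul_smul] at this
    · have h3 : (γ⁻¹ * g * γ) • (γ⁻¹ • w) = γ⁻¹ • (g • w) := by
        rw [← mul_smul, show γ⁻¹ * g * γ * γ⁻¹ = γ⁻¹ * g by group, mul_smul]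
      rw [h3]
      have := up_lt hγ.inv hw3; rwa [inv_smul_smul] at this
    · have h3 : (γ⁻¹ * g * γ) • (γ⁻¹ • w) = γ⁻¹ • (g • w) := by
        rw [← mul_smul, show γ⁻¹ * g * γ * γ⁻¹ = γ⁻¹ * g by group, mul_smul]
      rw [h3]
      have := up_lt hγ.inv hw4; rwa [inv_smul_smul] at this

lemma Good.translate_eq {p q : X} (hpq : Good G p q) {g g' : G} (hg : IsUp g) (hg' : IsUp g')
    {z : X} (hz1 : g • p < z) (hz2 : z < g • q) (hz1' : g' • p < z) (hz2' : z < g' • q) :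
    g • p = g' • p ∧ g • q = g' • q := by
  have key := hpq (g'⁻¹ * g) (hg'.inv.mul hg) ?_
  · constructor
    · have := key.1
      rw [mul_smul] at this
      have h2 := congrArg (fun t => g' • t) this
      simpa [smul_inv_smul] using h2
    · have := key.2
      rw [mul_smul] at this
      have h2 := congrArg (fun t => g' • t) this
      simpa [smul_inv_smul] using h2
  · refine ⟨g⁻¹ • z, ⟨?_, ?_⟩, ?_, ?_⟩
    · have := up_lt hg.inv hz1; rwa [inv_smul_smul] at this
    · have := up_lt hg.inv hz2; rwa [inv_smul_smul] at this
    · have h3 : (g'⁻¹ * g) • (g⁻¹ • z) = g'⁻¹ • z := by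
        rw [← mul_smul, show g'⁻¹ * g * g⁻¹ = g'⁻¹ by group]
      rw [h3]
      have := up_lt hg'.inv hz1'; rwa [inv_smul_smul] at this
    · have h3 : (g'⁻¹ * g) • (g⁻¹ • z) = g'⁻¹ • z := by
        rw [← mul_smul, show g'⁻¹ * g * g⁻¹ = g'⁻¹ by group]
      rw [h3]
      have := up_lt hg'.inv hz2'; rwa [inv_smul_smul] at this

lemma exists_c0 (hexp : ∃ c > 0, ∀ x y : X, x ≠ y → ∃ g : G, c < dist (g • x) (g • y)) :
    ∃ c₀ : ℝ, 0 < c₀ ∧ c₀ ≤ 1/2 ∧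
      ∀ x y : X, x ≠ y → ∃ g : G, IsUp g ∧ c₀ < dist (g • x) (g • y) := by
  obtain ⟨c, hc, hE⟩ := hexp
  by_cases hall : ∀ g : G, IsUp g
  · refine ⟨min c (1/2), lt_min hc (by norm_num), min_le_right _ _, fun x y hxy => ?_⟩
    obtain ⟨g, hg⟩ := hE x y hxy
    exact ⟨g, hall g, lt_of_le_of_lt (min_le_left _ _) hg⟩
  · push_neg at hall
    obtain ⟨r, hr⟩ := hall
    have hucont : UniformContinuous (fun x : X => r • x) :=
      CompactSpace.uniformContinuous_of_continuous (continuous_const_smul r)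
    obtain ⟨δ, hδ, hδ2⟩ := Metric.uniformContinuous_iff.1 hucont c hc
    refine ⟨min c (min (δ/2) (1/2)), lt_min hc (lt_min (by linarith) (by norm_num)),
      (min_le_right _ _).trans (min_le_right _ _), fun x y hxy => ?_⟩
    obtain ⟨g, hg⟩ := hE x y hxy
    by_cases hup : IsUp g
    · exact ⟨g, hup, lt_of_le_of_lt (min_le_left _ _) hg⟩
    · refine ⟨r⁻¹ * g, ?_, ?_⟩
      · rw [IsUp, mul_smul, not_up hup, ← not_up hr, inv_smul_smul]
      · have hkey : δ ≤ dist ((r⁻¹ * g) • x) ((r⁻¹ * g) • y) := by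
          by_contra hlt
          push_neg at hlt
          have := hδ2 hlt
          rw [← mul_smul, ← mul_smul, mul_inv_cancel_left] at this
          exact absurd hg (not_lt.2 this.le)
        calc min c (min (δ/2) (1/2)) ≤ δ/2 := (min_le_right _ _).trans (min_le_left _ _)
        _ < δ := by linarith
        _ ≤ _ := hkey

variable (G) in
/-- intervals with good endpoints and length at least `c₀` -/
structure QI (c₀ : ℝ) where
  p : X
  q : X
  len : c₀ ≤ (q : ℝ) - (p : ℝ)
  good : Good G p q

variable {c₀ : ℝ}

/-- `QLE It J` : `It` is contained in a translate of `J`. -/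
def QLE (It J : QI G c₀) : Prop := ∃ g : G, IsUp g ∧ g • J.p ≤ It.p ∧ It.q ≤ g • J.q

lemma QLE.rfl (It : QI G c₀) : QLE It It :=
  ⟨1, IsUp.one, by rw [one_smul], by rw [one_smul]⟩

lemma QLE.trans {It J K : QI G c₀} (h1 : QLE It J) (h2 : QLE J K) : QLE It K := by
  obtain ⟨g, hg, hg1, hg2⟩ := h1
  obtain ⟨h, hh, hh1, hh2⟩ := h2
  refine ⟨g * h, hg.mul hh, ?_, ?_⟩
  · rw [mul_smul]; exact le_trans (up_le hg hh1) hg1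
  · rw [mul_smul]; exact le_trans hg2 (up_le hg hh2)

variable (G) in
/-- the set of "long" translates of an interval -/
def SD (c₀ : ℝ) (It : QI G c₀) : Set (ℝ × ℝ) :=
  {pr | ∃ g : G, IsUp g ∧ pr.1 = ↑(g • It.p) ∧ pr.2 = ↑(g • It.q) ∧ c₀ ≤ pr.2 - pr.1}

lemma SD_base {It : QI G c₀} : ((It.p : ℝ), (It.q : ℝ)) ∈ SD G c₀ It :=
  ⟨1, IsUp.one, by rw [one_smul], by rw [one_smul], It.len⟩

lemma SD_eq_of_close (hc₀ : 0 < c₀) {It : QI G c₀} {pr pr' : ℝ × ℝ}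
    (h : pr ∈ SD G c₀ It) (h' : pr' ∈ SD G c₀ It) (hcl : |pr.1 - pr'.1| < c₀) : pr = pr' := by
  obtain ⟨g, hg, e1, e2, hlen⟩ := h
  obtain ⟨g', hg', e1', e2', hlen'⟩ := h'
  rw [abs_lt] at hcl
  set z : ℝ := (max pr.1 pr'.1 + min pr.2 pr'.2) / 2 with hz
  have hmaxmin : max pr.1 pr'.1 < min pr.2 pr'.2 := by
    rw [max_lt_iff, lt_min_iff, lt_min_iff]
    refine ⟨⟨by linarith, by linarith⟩, by linarith, by linarith⟩
  have hz1 : max pr.1 pr'.1 < z := by rw [hz]; linarith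
  have hz2 : z < min pr.2 pr'.2 := by rw [hz]; linarith
  have hz0 : 0 ≤ z := le_trans (le_trans (g • It.p).2.1 (by rw [← e1]; exact le_max_left _ _)) hz1.le
  have hzle1 : z ≤ 1 := le_trans hz2.le (le_trans (min_le_left _ _) (by rw [e2]; exact (g • It.q).2.2))
  set zX : X := ⟨z, hz0, hzle1⟩ with hzX
  have key := It.good.translate_eq hg hg'
    (z := zX)
    (by rw [← Subtype.coe_lt_coe]; show (↑(g • It.p) : ℝ) < z;
        rw [← e1]; exact lt_of_le_of_lt (le_max_left _ _) hz1)
    (by rw [← Subtype.coe_lt_coe]; show z < (↑(g • It.q) : ℝ);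
        rw [← e2]; exact lt_of_lt_of_le hz2 (min_le_left _ _))
    (by rw [← Subtype.coe_lt_coe]; show (↑(g' • It.p) : ℝ) < z;
        rw [← e1']; exact lt_of_le_of_lt (le_max_right _ _) hz1)
    (by rw [← Subtype.coe_lt_coe]; show z < (↑(g' • It.q) : ℝ);
        rw [← e2']; exact lt_of_lt_of_le hz2 (min_le_right _ _))
  have : pr.1 = pr'.1 := by rw [e1, e1', key.1]
  have : pr.2 = pr'.2 := by rw [e2, e2', key.2]
  exact Prod.ext ‹pr.1 = pr'.1› ‹pr.2 = pr'.2›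

lemma SD_finite (hc₀ : 0 < c₀) (It : QI G c₀) : (SD G c₀ It).Finite := by
  have hinj : Set.InjOn (fun pr : ℝ × ℝ => ⌊pr.1 / c₀⌋) (SD G c₀ It) := by
    intro pr h pr' h' heq
    simp only at heq
    apply SD_eq_of_close hc₀ h h'
    have h1 := Int.floor_le (pr.1 / c₀)
    have h2 := Int.lt_floor_add_one (pr.1 / c₀)
    have h3 := Int.floor_le (pr'.1 / c₀)
    have h4 := Int.lt_floor_add_one (pr'.1 / c₀)
    rw [heq] at h1 h2
    have hd : |pr.1 / c₀ - pr'.1 / c₀| < 1 := by rw [abs_lt]; constructor <;> linarith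
    have he : pr.1 - pr'.1 = (pr.1 / c₀ - pr'.1 / c₀) * c₀ := by field_simp
    rw [he, abs_mul, abs_of_pos hc₀]
    nlinarith [abs_nonneg (pr.1 / c₀ - pr'.1 / c₀)]
  apply Set.Finite.of_finite_image ?_ hinj
  apply (Set.finite_Icc (0 : ℤ) ⌊1 / c₀⌋).subset
  rintro _ ⟨pr, hpr, rfl⟩
  obtain ⟨g, hg, e1, e2, hlen⟩ := hpr
  have h0 : 0 ≤ pr.1 := by rw [e1]; exact (g • It.p).2.1
  have h1 : pr.1 ≤ 1 := by rw [e1]; exact (g • It.p).2.2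
  constructor
  · exact Int.floor_nonneg.2 (div_nonneg h0 hc₀.le)
  · exact Int.floor_le_floor (by gcongr)

lemma chain_bound (hc₀ : 0 < c₀) (hc₀2 : c₀ ≤ 1/2)
    (hE : ∀ x y : X, x ≠ y → ∃ g : G, IsUp g ∧ c₀ < dist (g • x) (g • y))
    (c : Set (QI G c₀)) (hchain : IsChain (fun It J => QLE J It) c) :
    ∃ ub : QI G c₀, ∀ It ∈ c, QLE ub It := by
  rcases c.eq_empty_or_nonempty with rfl | hne
  · refine ⟨⟨0, 1, ?_, ?_⟩, by simp⟩
    · show c₀ ≤ ((1:X) : ℝ) - ((0:X) : ℝ)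
      have e1 : ((1:X) : ℝ) = 1 := rfl
      have e0 : ((0:X) : ℝ) = 0 := rfl
      rw [e1, e0]; linarith
    · intro g hg _
      exact ⟨hg, up_one hg⟩
  · haveI hι : Nonempty ↥c := hne.to_subtype
    set Y : QI G c₀ → Set ℝ :=
      fun It => ⋃ pr ∈ SD G c₀ It, Icc (pr.1 + c₀/4) (pr.2 - c₀/4) with hY
    have hYne : ∀ It : QI G c₀, (Y It).Nonempty := by
      intro It
      refine ⟨((It.p : ℝ) + (It.q : ℝ))/2, Set.mem_biUnion SD_base ?_⟩
      constructor
      · simp only; linarith [It.len]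
      · simp only; linarith [It.len]
    have hYcomp : ∀ It, IsCompact (Y It) :=
      fun It => (SD_finite hc₀ It).isCompact_biUnion (fun _ _ => isCompact_Icc)
    have hYclosed : ∀ It, IsClosed (Y It) :=
      fun It => (SD_finite hc₀ It).isClosed_biUnion (fun _ _ => isClosed_Icc)
    have hYmono : ∀ It J : QI G c₀, QLE It J → Y It ⊆ Y J := by
      intro It J hIJ w hw
      obtain ⟨g, hg, hg1, hg2⟩ := hIJ
      obtain ⟨pr, hpr, hw2⟩ := Set.mem_iUnion₂.1 hw
      obtain ⟨f, hf, e1, e2, hlen⟩ := hpr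
      refine Set.mem_biUnion (show ((↑((f * g) • J.p) : ℝ), (↑((f * g) • J.q) : ℝ)) ∈ SD G c₀ J
        from ⟨f * g, hf.mul hg, rfl, rfl, ?_⟩) ?_
      · have a1 : ((f * g) • J.p : X) ≤ f • It.p := by rw [mul_smul]; exact up_le hf hg1
        have a2 : (f • It.q : X) ≤ (f * g) • J.q := by rw [mul_smul]; exact up_le hf hg2
        rw [← Subtype.coe_le_coe] at a1 a2
        rw [e1, e2] at hlen
        simp only
        linarith
      · have a1 : ((f * g) • J.p : X) ≤ f • It.p := by rw [mul_smul]; exact up_le hf hg1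
        have a2 : (f • It.q : X) ≤ (f * g) • J.q := by rw [mul_smul]; exact up_le hf hg2
        rw [← Subtype.coe_le_coe] at a1 a2
        obtain ⟨b1, b2⟩ := hw2
        rw [e1] at b1; rw [e2] at b2
        constructor
        · simp only; linarith
        · simp only; linarith
    have hdir : Directed (· ⊇ ·) (fun i : ↥c => Y i.1) := by
      intro i j
      rcases eq_or_ne i j with rfl | hij
      · exact ⟨i, le_refl _, le_refl _⟩
      · rcases hchain i.2 j.2 (fun h => hij (Subtype.ext h)) with h | h
        · exact ⟨j, hYmono _ _ h, le_refl _⟩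
        · exact ⟨i, le_refl _, hYmono _ _ h⟩
    obtain ⟨w, hw⟩ := IsCompact.nonempty_iInter_of_directed_nonempty_isCompact_isClosed
      (fun i : ↥c => Y i.1) hdir (fun i => hYne i.1) (fun i => hYcomp i.1)
      (fun i => hYclosed i.1)
    rw [Set.mem_iInter] at hw
    have hsel : ∀ i : ↥c, ∃ g : G, IsUp g ∧
        (↑(g • i.1.p) : ℝ) + c₀/4 ≤ w ∧ w ≤ (↑(g • i.1.q) : ℝ) - c₀/4 := by
      intro i
      obtain ⟨pr, hpr, hw2⟩ := Set.mem_iUnion₂.1 (hw i)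
      obtain ⟨g, hg, e1, e2, _⟩ := hpr
      exact ⟨g, hg, by rw [← e1]; exact hw2.1, by rw [← e2]; exact hw2.2⟩
    choose gg hup hm1 hm2 using hsel
    have hbddA : BddAbove (Set.range fun i : ↥c => (↑(gg i • i.1.p) : ℝ)) :=
      ⟨w, by rintro _ ⟨i, rfl⟩; linarith [hm1 i]⟩
    have hbddB : BddBelow (Set.range fun i : ↥c => (↑(gg i • i.1.q) : ℝ)) :=
      ⟨w, by rintro _ ⟨i, rfl⟩; linarith [hm2 i]⟩
    set A := ⨆ i : ↥c, (↑(gg i • i.1.p) : ℝ) with hA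
    set B := ⨅ i : ↥c, (↑(gg i • i.1.q) : ℝ) with hB
    have hAle : ∀ i : ↥c, (↑(gg i • i.1.p) : ℝ) ≤ A := fun i => le_ciSup hbddA i
    have hAub : A ≤ w - c₀/4 := ciSup_le fun i => by linarith [hm1 i]
    have hBle : ∀ i : ↥c, B ≤ (↑(gg i • i.1.q) : ℝ) := fun i => ciInf_le hbddB i
    have hBlb : w + c₀/4 ≤ B := le_ciInf fun i => by linarith [hm2 i]
    have i₀ : ↥c := Classical.arbitrary _
    have hA0 : 0 ≤ A := le_trans (gg i₀ • i₀.1.p).2.1 (hAle i₀)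
    have hB1 : B ≤ 1 := le_trans (hBle i₀) (gg i₀ • i₀.1.q).2.2
    have hA1 : A ≤ 1 := by linarith
    have hB0 : 0 ≤ B := by linarith
    set pA : X := ⟨A, hA0, hA1⟩ with hpA
    set pB : X := ⟨B, hB0, hB1⟩ with hpB
    have hAB : (pA : ℝ) < (pB : ℝ) := by show A < B; linarith
    have hGoodAB : Good G pA pB := by
      intro g hg hex
      obtain ⟨w', ⟨hw1, hw2⟩, hw3, hw4⟩ := hex
      have hfix : ∀ i : ↥c, g • (gg i • i.1.p) = gg i • i.1.p ∧
          g • (gg i • i.1.q) = gg i • i.1.q := by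
        intro i
        apply (i.1.good.smul (hup i)) g hg
        refine ⟨w', ⟨?_, ?_⟩, ?_, ?_⟩
        · exact lt_of_le_of_lt (Subtype.coe_le_coe.1 (by rw [hpA] at hw1 ⊢; exact hAle i)) hw1
        · exact lt_of_lt_of_le hw2 (Subtype.coe_le_coe.1 (hBle i))
        · exact lt_of_le_of_lt (Subtype.coe_le_coe.1 (hAle i)) hw3
        · exact lt_of_lt_of_le hw4 (Subtype.coe_le_coe.1 (hBle i))
      have hgeA : ∀ h' : G, IsUp h' → (∀ i : ↥c, h' • (gg i • i.1.p) = gg i • i.1.p) →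
          A ≤ (↑(h' • pA) : ℝ) := by
        intro h' hh' hfix'
        refine ciSup_le fun i => ?_
        have h5 : (gg i • i.1.p : X) ≤ pA := Subtype.coe_le_coe.1 (hAle i)
        have h6 := up_le hh' h5
        rw [hfix' i] at h6
        exact Subtype.coe_le_coe.2 h6
      have hgeB : ∀ h' : G, IsUp h' → (∀ i : ↥c, h' • (gg i • i.1.q) = gg i • i.1.q) →
          (↑(h' • pB) : ℝ) ≤ B := by
        intro h' hh' hfix'
        refine le_ciInf fun i => ?_
        have h5 : pB ≤ (gg i • i.1.q : X) := Subtype.coe_le_coe.1 (hBle i)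
        have h6 := up_le hh' h5
        rw [hfix' i] at h6
        exact Subtype.coe_le_coe.2 h6
      constructor
      · have h7 := hgeA g hg (fun i => (hfix i).1)
        have h8 := hgeA g⁻¹ hg.inv (fun i => by
          conv_lhs => rw [← (hfix i).1]
          rw [inv_smul_smul])
        have h9 : pA ≤ g⁻¹ • pA := h8
        have h10 := up_le hg h9
        rw [smul_inv_smul] at h10
        exact le_antisymm h10 h7
      · have h7 := hgeB g hg (fun i => (hfix i).2)
        have h8 := hgeB g⁻¹ hg.inv (fun i => by
          conv_lhs => rw [← (hfix i).2]
          rw [inv_smul_smul])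
        have h9 : g⁻¹ • pB ≤ pB := h8
        have h10 := up_le hg h9
        rw [smul_inv_smul] at h10
        exact le_antisymm h7 h10
    have hnepair : pA ≠ pB := fun h => absurd (congrArg Subtype.val h) (ne_of_lt hAB)
    obtain ⟨gs, hgs, hgd⟩ := hE pA pB hnepair
    have hABs : gs • pA < gs • pB := up_lt hgs (Subtype.coe_lt_coe.1 hAB)
    have hdistlen : dist (gs • pA) (gs • pB) = (↑(gs • pB) : ℝ) - ↑(gs • pA) := by
      rw [Subtype.dist_eq, Real.dist_eq, abs_of_nonpos (by
        have := Subtype.coe_lt_coe.2 hABs; linarith)]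
      ring
    refine ⟨⟨gs • pA, gs • pB, by rw [← hdistlen]; exact hgd.le, hGoodAB.smul hgs⟩, ?_⟩
    intro It hI
    refine ⟨gs * gg ⟨It, hI⟩, hgs.mul (hup _), ?_, ?_⟩
    · show (gs * gg ⟨It, hI⟩) • It.p ≤ gs • pA
      rw [mul_smul]
      exact up_le hgs (Subtype.coe_le_coe.1 (hAle ⟨It, hI⟩))
    · show gs • pB ≤ (gs * gg ⟨It, hI⟩) • It.q
      rw [mul_smul]
      exact up_le hgs (Subtype.coe_le_coe.1 (hBle ⟨It, hI⟩))

lemma exists_minimal (hc₀ : 0 < c₀) (hc₀2 : c₀ ≤ 1/2)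
    (hE : ∀ x y : X, x ≠ y → ∃ g : G, IsUp g ∧ c₀ < dist (g • x) (g • y)) :
    ∃ m : QI G c₀, ∀ J, QLE J m → QLE m J := by
  obtain ⟨m, hm⟩ := exists_maximal_of_chains_bounded
    (r := fun It J : QI G c₀ => QLE J It)
    (fun c hc => (chain_bound hc₀ hc₀2 hE c hc).imp (fun ub h a ha => h a ha))
    (fun {a b c} h1 h2 => QLE.trans h2 h1)
  exact ⟨m, hm⟩

end ExpansiveAux

open ExpansiveAux in
set_option maxHeartbeats 2000000 in
/-- For an expansive action on [0,1] there are a subgroup H and an H-invariant open interval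
(a,b) on which H acts minimally, with the action of H on [a,b] expansive. -/
theorem expansive_action_has_minimal_open_interval
    (G : Type*) [Group G] [MulAction G unitInterval] [ContinuousConstSMul G unitInterval]
    (hexp : ∃ c > 0, ∀ x y : unitInterval, x ≠ y → ∃ g : G, c < dist (g • x) (g • y)) :
    ∃ (H : Subgroup G) (a b : ℝ), 0 ≤ a ∧ a < b ∧ b ≤ 1 ∧
      (∀ h ∈ H, ∀ x : unitInterval, a < (x : ℝ) ∧ (x : ℝ) < b →
        a < ((h • x : unitInterval) : ℝ) ∧ ((h • x : unitInterval) : ℝ) < b) ∧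
      (∀ x : unitInterval, a < (x : ℝ) ∧ (x : ℝ) < b →
        ∀ y : unitInterval, a < (y : ℝ) ∧ (y : ℝ) < b →
          y ∈ closure {z : unitInterval | ∃ h ∈ H, h • x = z}) ∧
      (∃ c > 0, ∀ x y : unitInterval, a ≤ (x : ℝ) ∧ (x : ℝ) ≤ b →
        a ≤ (y : ℝ) ∧ (y : ℝ) ≤ b → x ≠ y → ∃ h ∈ H, c < dist (h • x) (h • y)) := by
  classical
  obtain ⟨c₀, hc₀, hc₀2, hE⟩ := exists_c0 hexp
  obtain ⟨m, hmin⟩ := exists_minimal hc₀ hc₀2 hE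
  set pa : unitInterval := m.p with hpa
  set pb : unitInterval := m.q with hpb
  set a : ℝ := (pa : ℝ) with ha
  set b : ℝ := (pb : ℝ) with hb
  set H : Subgroup G := (MulAction.stabilizer G (0 : unitInterval) ⊓
    MulAction.stabilizer G pa) ⊓ MulAction.stabilizer G pb with hH
  have hmemH : ∀ h : G, h ∈ H ↔ (IsUp h ∧ h • pa = pa ∧ h • pb = pb) := by
    intro h
    rw [hH, Subgroup.mem_inf, Subgroup.mem_inf,
      MulAction.mem_stabilizer_iff, MulAction.mem_stabilizer_iff, MulAction.mem_stabilizer_iff]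
    constructor
    · rintro ⟨⟨h1, h2⟩, h3⟩; exact ⟨h1, h2, h3⟩
    · rintro ⟨h1, h2, h3⟩; exact ⟨⟨h1, h2⟩, h3⟩
  have hab : a < b := by have := m.len; linarith
  -- invariance
  have hinv : ∀ h ∈ H, ∀ x : unitInterval, a < (x : ℝ) ∧ (x : ℝ) < b →
      a < ((h • x : unitInterval) : ℝ) ∧ ((h • x : unitInterval) : ℝ) < b := by
    intro h hh x ⟨hx1, hx2⟩
    obtain ⟨hup, h1, h2⟩ := (hmemH h).1 hh
    constructor
    · have h3 : pa < x := Subtype.coe_lt_coe.1 hx1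
      have h4 := up_lt hup h3
      rw [h1] at h4
      exact Subtype.coe_lt_coe.2 h4
    · have h3 : x < pb := Subtype.coe_lt_coe.1 hx2
      have h4 := up_lt hup h3
      rw [h2] at h4
      exact Subtype.coe_lt_coe.2 h4
  -- minimality
  have hminimal : ∀ x : unitInterval, a < (x : ℝ) ∧ (x : ℝ) < b →
      ∀ y : unitInterval, a < (y : ℝ) ∧ (y : ℝ) < b →
        y ∈ closure {z : unitInterval | ∃ h ∈ H, h • x = z} := by
    intro x ⟨hx1, hx2⟩ y ⟨hy1, hy2⟩
    by_contra hy
    set orb : Set unitInterval := {z : unitInterval | ∃ h ∈ H, h • x = z} with horb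
    set D : Set unitInterval := closure orb ∪ {pa, pb} with hD
    have hDclosed : IsClosed D :=
      isClosed_closure.union ((Set.finite_singleton pb).insert pa).isClosed
    have hxD : x ∈ D := Or.inl (subset_closure ⟨1, one_mem H, one_smul G x⟩)
    have hpaD : pa ∈ D := Or.inr (Or.inl rfl)
    have hpbD : pb ∈ D := Or.inr (Or.inr rfl)
    have horbinv : ∀ h : G, h ∈ H → ∀ z ∈ orb, h • z ∈ orb := by
      rintro h hh z ⟨h', hh', rfl⟩
      exact ⟨h * h', mul_mem hh hh', (mul_smul h h' x).symm ▸ rfl⟩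
    have hDinv : ∀ h : G, h ∈ H → ∀ d ∈ D, h • d ∈ D := by
      intro h hh d hd
      rcases hd with hd | hd
      · exact Or.inl (map_mem_closure (continuous_const_smul h) hd
          (fun z hz => horbinv h hh z hz))
      · rcases hd with rfl | hd
        · exact Or.inr (Or.inl ((hmemH h).1 hh).2.1)
        · rcases hd with rfl
          exact Or.inr (Or.inr ((hmemH h).1 hh).2.2)
    have hDbound : ∀ d ∈ D, a ≤ (d : ℝ) ∧ (d : ℝ) ≤ b := by
      intro d hd
      rcases hd with hd | hd
      · have hsub : orb ⊆ {z : unitInterval | a ≤ (z : ℝ) ∧ (z : ℝ) ≤ b} := by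
          rintro z ⟨h', hh', rfl⟩
          obtain ⟨hup, h1, h2⟩ := (hmemH h').1 hh'
          constructor
          · have h3 : pa ≤ x := Subtype.coe_le_coe.1 hx1.le
            have h4 := up_le hup h3
            rw [h1] at h4
            exact Subtype.coe_le_coe.2 h4
          · have h3 : x ≤ pb := Subtype.coe_le_coe.1 hx2.le
            have h4 := up_le hup h3
            rw [h2] at h4
            exact Subtype.coe_le_coe.2 h4
        have hcl : IsClosed {z : unitInterval | a ≤ (z : ℝ) ∧ (z : ℝ) ≤ b} := by
          have : {z : unitInterval | a ≤ (z : ℝ) ∧ (z : ℝ) ≤ b} =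
              {z : unitInterval | a ≤ (z : ℝ)} ∩ {z : unitInterval | (z : ℝ) ≤ b} := rfl
          rw [this]
          exact (isClosed_le continuous_const continuous_subtype_val).inter
            (isClosed_le continuous_subtype_val continuous_const)
        exact closure_minimal hsub hcl hd
      · rcases hd with rfl | hd
        · exact ⟨le_refl _, hab.le⟩
        · rcases hd with rfl
          exact ⟨hab.le, le_refl _⟩
    have hynotD : y ∉ D := by
      intro hyD
      rcases hyD with h | h
      · exact hy h
      · rcases h with h | h
        · rw [h] at hy1; exact absurd hy1 (lt_irrefl _)
        · rw [Set.mem_singleton_iff] at h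
          rw [h] at hy2; exact absurd hy2 (lt_irrefl _)
    -- sup below y and inf above y
    set su : Set ℝ := Subtype.val '' (D ∩ {z : unitInterval | (z : ℝ) ≤ (y : ℝ)}) with hsu
    set sv : Set ℝ := Subtype.val '' (D ∩ {z : unitInterval | (y : ℝ) ≤ (z : ℝ)}) with hsv
    have hsune : su.Nonempty := ⟨a, ⟨pa, ⟨hpaD, hy1.le⟩, rfl⟩⟩
    have hsvne : sv.Nonempty := ⟨b, ⟨pb, ⟨hpbD, hy2.le⟩, rfl⟩⟩
    have hsucomp : IsCompact su :=
      ((hDclosed.inter (isClosed_le continuous_subtype_val continuous_const)).isCompact).image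
        continuous_subtype_val
    have hsvcomp : IsCompact sv :=
      ((hDclosed.inter (isClosed_le continuous_const continuous_subtype_val)).isCompact).image
        continuous_subtype_val
    obtain ⟨pu, ⟨hpuD, hpuy⟩, hpucoe⟩ := hsucomp.sSup_mem hsune
    obtain ⟨pv, ⟨hpvD, hpvy⟩, hpvcoe⟩ := hsvcomp.sInf_mem hsvne
    set u : ℝ := (pu : ℝ) with hu
    set v : ℝ := (pv : ℝ) with hv
    have hau : a ≤ u := (hDbound pu hpuD).1
    have hvb : v ≤ b := (hDbound pv hpvD).2
    have huy : u < (y : ℝ) := by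
      have h0 : (pu : ℝ) ≤ (y : ℝ) := hpuy
      rcases lt_or_eq_of_le h0 with h | h
      · exact h
      · exfalso; apply hynotD
        have h2 : pu = y := Subtype.ext (show (pu : ℝ) = (y : ℝ) from h)
        rwa [← h2]
    have hyv : (y : ℝ) < v := by
      have h0 : (y : ℝ) ≤ (pv : ℝ) := hpvy
      rcases lt_or_eq_of_le h0 with h | h
      · exact h
      · exfalso; apply hynotD
        have h2 : pv = y := Subtype.ext (show (pv : ℝ) = (y : ℝ) from h.symm)
        rwa [← h2]
    have gap : ∀ d ∈ D, ¬(u < (d : ℝ) ∧ (d : ℝ) < v) := by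
      rintro d hd ⟨hd1, hd2⟩
      rcases le_total (d : ℝ) (y : ℝ) with h | h
      · have h3 : (d : ℝ) ≤ sSup su := le_csSup hsucomp.bddAbove ⟨d, ⟨hd, h⟩, rfl⟩
        rw [← hpucoe] at h3
        linarith
      · have h3 : sInf sv ≤ (d : ℝ) := csInf_le hsvcomp.bddBelow ⟨d, ⟨hd, h⟩, rfl⟩
        rw [← hpvcoe] at h3
        linarith
    -- left endpoint coercion facts
    have hpucoe' : (pu : ℝ) = u := rfl
    have hpvcoe' : (pv : ℝ) = v := rfl
    have hGood : Good G pu pv := by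
      intro g hg hex
      obtain ⟨w, ⟨hw1, hw2⟩, hw3, hw4⟩ := hex
      have hwa : pa < w := lt_of_le_of_lt (Subtype.coe_le_coe.1 (by rw [hpucoe']; exact hau)) hw1
      have hwb : w < pb := lt_of_lt_of_le hw2 (Subtype.coe_le_coe.1 (by rw [hpvcoe']; exact hvb))
      have hga : pa < g • w := lt_of_le_of_lt (Subtype.coe_le_coe.1 (by rw [hpucoe']; exact hau)) hw3
      have hgb : g • w < pb := lt_of_lt_of_le hw4 (Subtype.coe_le_coe.1 (by rw [hpvcoe']; exact hvb))
      have hkey := m.good g hg ⟨w, ⟨hwa, hwb⟩, hga, hgb⟩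
      have hgH : g ∈ H := (hmemH g).2 ⟨hg, hkey.1, hkey.2⟩
      have hpuD' : g • pu ∈ D := hDinv g hgH pu hpuD
      have hpvD' : g • pv ∈ D := hDinv g hgH pv hpvD
      have gap' : ∀ d ∈ D, ¬(((g • pu : unitInterval) : ℝ) < (d : ℝ) ∧
          (d : ℝ) < ((g • pv : unitInterval) : ℝ)) := by
        rintro d hd ⟨h1, h2⟩
        apply gap (g⁻¹ • d) (hDinv g⁻¹ (inv_mem hgH) d hd)
        constructor
        · have h3 : g • pu < d := Subtype.coe_lt_coe.1 h1
          have h4 := up_lt hg.inv h3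
          rw [inv_smul_smul] at h4
          rw [← hpucoe']
          exact Subtype.coe_lt_coe.2 h4
        · have h3 : d < g • pv := Subtype.coe_lt_coe.1 h2
          have h4 := up_lt hg.inv h3
          rw [inv_smul_smul] at h4
          rw [← hpvcoe']
          exact Subtype.coe_lt_coe.2 h4
      constructor
      · rcases lt_trichotomy u ((g • pu : unitInterval) : ℝ) with h | h | h
        · exfalso
          apply gap (g • pu) hpuD'
          refine ⟨h, ?_⟩
          have h5 := up_lt hg hw1
          have h6 : ((g • pu : unitInterval) : ℝ) < ((g • w : unitInterval) : ℝ) :=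
            Subtype.coe_lt_coe.2 h5
          have h7 : ((g • w : unitInterval) : ℝ) < v := by
            rw [← hpvcoe']; exact Subtype.coe_lt_coe.2 hw4
          linarith
        · exact Subtype.ext (by rw [← h, hpucoe'])
        · exfalso
          apply gap' pu hpuD
          refine ⟨by rw [hpucoe']; exact h, ?_⟩
          have h5 := up_lt hg hw2
          have h6 : ((g • w : unitInterval) : ℝ) < ((g • pv : unitInterval) : ℝ) :=
            Subtype.coe_lt_coe.2 h5
          have h7 : u < ((g • w : unitInterval) : ℝ) := by
            rw [← hpucoe']; exact Subtype.coe_lt_coe.2 hw3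
          rw [hpucoe']
          linarith
      · rcases lt_trichotomy ((g • pv : unitInterval) : ℝ) v with h | h | h
        · exfalso
          apply gap (g • pv) hpvD'
          refine ⟨?_, h⟩
          have h5 := up_lt hg hw2
          have h6 : ((g • w : unitInterval) : ℝ) < ((g • pv : unitInterval) : ℝ) :=
            Subtype.coe_lt_coe.2 h5
          have h7 : u < ((g • w : unitInterval) : ℝ) := by
            rw [← hpucoe']; exact Subtype.coe_lt_coe.2 hw3
          linarith
        · exact Subtype.ext (by rw [h, hpvcoe'])
        · exfalso
          apply gap' pv hpvD
          refine ⟨?_, by rw [hpvcoe']; exact h⟩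
          have h5 := up_lt hg hw1
          have h6 : ((g • pu : unitInterval) : ℝ) < ((g • w : unitInterval) : ℝ) :=
            Subtype.coe_lt_coe.2 h5
          have h7 : ((g • w : unitInterval) : ℝ) < v := by
            rw [← hpvcoe']; exact Subtype.coe_lt_coe.2 hw4
          rw [hpvcoe']
          linarith
    -- expand and contradict minimality
    have hpupv : pu < pv := Subtype.coe_lt_coe.1 (by rw [hpucoe', hpvcoe']; linarith)
    obtain ⟨gs, hgs, hgd⟩ := hE pu pv (ne_of_lt hpupv)
    have hABs : gs • pu < gs • pv := up_lt hgs hpupv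
    have hlen : c₀ ≤ ((gs • pv : unitInterval) : ℝ) - ((gs • pu : unitInterval) : ℝ) := by
      have h6 := Subtype.coe_lt_coe.2 hABs
      rw [Subtype.dist_eq, Real.dist_eq, abs_of_nonpos (by linarith)] at hgd
      linarith
    set J : QI G c₀ := ⟨gs • pu, gs • pv, hlen, hGood.smul hgs⟩ with hJ
    have hpapu : pa ≤ pu := Subtype.coe_le_coe.1 (by rw [hpucoe']; exact hau)
    have hpvpb : pv ≤ pb := Subtype.coe_le_coe.1 (by rw [hpvcoe']; exact hvb)
    have hJle : QLE J m := ⟨gs, hgs, up_le hgs hpapu, up_le hgs hpvpb⟩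
    obtain ⟨f, hf, hf1, hf2⟩ := hmin J hJle
    set φ : G := f * gs with hφ
    have hφup : IsUp φ := hf.mul hgs
    have hφu : φ • pu ≤ pa := by rw [hφ, mul_smul]; exact hf1
    have hφv : pb ≤ φ • pv := by rw [hφ, mul_smul]; exact hf2
    have hwit1 : pu < φ⁻¹ • y := by
      have h3 : φ • pu < y :=
        lt_of_le_of_lt hφu (Subtype.coe_lt_coe.1 hy1)
      have h4 := up_lt hφup.inv h3
      rwa [inv_smul_smul] at h4
    have hwit2 : φ⁻¹ • y < pv := by
      have h3 : y < φ • pv :=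
        lt_of_lt_of_le (Subtype.coe_lt_coe.1 hy2) hφv
      have h4 := up_lt hφup.inv h3
      rwa [inv_smul_smul] at h4
    have huy' : pu < y := Subtype.coe_lt_coe.1 (by rw [hpucoe']; exact huy)
    have hyv' : y < pv := Subtype.coe_lt_coe.1 (by rw [hpvcoe']; exact hyv)
    have hkey := hGood φ hφup ⟨φ⁻¹ • y, ⟨hwit1, hwit2⟩,
      by rw [smul_inv_smul]; exact huy', by rw [smul_inv_smul]; exact hyv'⟩
    have hua : u = a := by
      have h3 : pu ≤ pa := by rw [← hkey.1]; exact hφu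
      exact le_antisymm (by rw [← hpucoe']; exact Subtype.coe_le_coe.2 h3) hau
    have hvb2 : v = b := by
      have h3 : pb ≤ pv := by rw [← hkey.2]; exact hφv
      exact le_antisymm hvb (by rw [← hpvcoe']; exact Subtype.coe_le_coe.2 h3)
    exact gap x hxD ⟨by rw [hua]; exact hx1, by rw [hvb2]; exact hx2⟩
  -- expansiveness of H on [a,b]
  have hexp2 : ∃ c' > 0, ∀ x y : unitInterval, a ≤ (x : ℝ) ∧ (x : ℝ) ≤ b →
      a ≤ (y : ℝ) ∧ (y : ℝ) ≤ b → x ≠ y → ∃ h ∈ H, c' < dist (h • x) (h • y) := by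
    have haux : ∀ pr ∈ SD G c₀ m, ∃ d : ℝ, 0 < d ∧ ∃ γ : G,
        IsUp γ ∧ ((γ • pa : unitInterval) : ℝ) = pr.1 ∧ ((γ • pb : unitInterval) : ℝ) = pr.2 ∧
        ∀ z z' : unitInterval, dist z z' < d → dist (γ • z) (γ • z') < c₀ := by
      intro pr hpr
      obtain ⟨γ, hγ, e1, e2, _⟩ := hpr
      obtain ⟨d, hd, hd2⟩ := Metric.uniformContinuous_iff.1
        (CompactSpace.uniformContinuous_of_continuous
          (continuous_const_smul γ : Continuous fun z : unitInterval => γ • z)) c₀ hc₀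
      exact ⟨d, hd, γ, hγ, e1.symm, e2.symm, fun z z' hzz => hd2 hzz⟩
    have haux2 : ∀ pr : ℝ × ℝ, ∃ d : ℝ, 0 < d ∧ (pr ∈ SD G c₀ m → ∃ γ : G,
        IsUp γ ∧ ((γ • pa : unitInterval) : ℝ) = pr.1 ∧ ((γ • pb : unitInterval) : ℝ) = pr.2 ∧
        ∀ z z' : unitInterval, dist z z' < d → dist (γ • z) (γ • z') < c₀) := by
      intro pr
      by_cases h : pr ∈ SD G c₀ m
      · obtain ⟨d, hd, rest⟩ := haux pr h
        exact ⟨d, hd, fun _ => rest⟩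
      · exact ⟨1, one_pos, fun h' => absurd h' h⟩
    choose dfun hdpos hrest using haux2
    set F := (SD_finite hc₀ m).toFinset with hF
    have hFne : F.Nonempty := ⟨_, (Set.Finite.mem_toFinset _).2 SD_base⟩
    set δ := F.inf' hFne dfun with hδ
    have hδpos : 0 < δ := by
      rw [hδ, Finset.lt_inf'_iff]
      exact fun pr _ => hdpos pr
    refine ⟨δ/2, by linarith, ?_⟩
    rintro x y ⟨hx1, hx2⟩ ⟨hy1, hy2⟩ hxy
    obtain ⟨g, hg, hgd⟩ := hE x y hxy
    set pr : ℝ × ℝ := (((g • pa : unitInterval) : ℝ), ((g • pb : unitInterval) : ℝ)) with hpr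
    have hprS : pr ∈ SD G c₀ m := by
      refine ⟨g, hg, rfl, rfl, ?_⟩
      have b1 : ((g • pa : unitInterval) : ℝ) ≤ ((g • x : unitInterval) : ℝ) :=
        Subtype.coe_le_coe.2 (up_le hg (Subtype.coe_le_coe.1 hx1))
      have b2 : ((g • x : unitInterval) : ℝ) ≤ ((g • pb : unitInterval) : ℝ) :=
        Subtype.coe_le_coe.2 (up_le hg (Subtype.coe_le_coe.1 hx2))
      have b3 : ((g • pa : unitInterval) : ℝ) ≤ ((g • y : unitInterval) : ℝ) :=
        Subtype.coe_le_coe.2 (up_le hg (Subtype.coe_le_coe.1 hy1))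
      have b4 : ((g • y : unitInterval) : ℝ) ≤ ((g • pb : unitInterval) : ℝ) :=
        Subtype.coe_le_coe.2 (up_le hg (Subtype.coe_le_coe.1 hy2))
      rw [Subtype.dist_eq, Real.dist_eq] at hgd
      rcases abs_cases (((g • x : unitInterval) : ℝ) - ((g • y : unitInterval) : ℝ)) with
        ⟨he, _⟩ | ⟨he, _⟩ <;> (rw [he] at hgd; linarith)
    obtain ⟨γ, hγ, e1, e2, hmod⟩ := hrest pr hprS
    have hγa : γ • pa = g • pa := Subtype.ext (by rw [e1])
    have hγb : γ • pb = g • pb := Subtype.ext (by rw [e2])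
    set h : G := γ⁻¹ * g with hh
    have hhH : h ∈ H := (hmemH h).2 ⟨hγ.inv.mul hg,
      by rw [hh, mul_smul, ← hγa, inv_smul_smul],
      by rw [hh, mul_smul, ← hγb, inv_smul_smul]⟩
    refine ⟨h, hhH, ?_⟩
    have hge : dfun pr ≤ dist (h • x) (h • y) := by
      by_contra hlt
      push_neg at hlt
      have h9 := hmod _ _ hlt
      rw [hh, ← mul_smul, ← mul_smul, mul_inv_cancel_left] at h9
      exact absurd hgd (not_lt.2 h9.le)
    have hδle : δ ≤ dfun pr := Finset.inf'_le _ ((Set.Finite.mem_toFinset _).2 hprS)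
    linarith
  exact ⟨H, a, b, pa.2.1, hab, pb.2.2, hinv, hminimal, hexp2⟩
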